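/- Let N_d and N_p be coprime positive integers. For all real numbers ΔΩ and ΔM, there exists a real number τ such that ΔΩ ≡ −2π N_d τ (mod 2π) and ΔM ≡ 2π N_p τ (mod 2π) if and only if N_p·ΔΩ + N_d·ΔM ≡ 0 (mod 2π). -/

import Mathlib

open Real

/-- Theorem 1 (prograde frame): two positions lie on the same relative trajectory,
i.e. there is a normalized time `τ` with `ΔΩ ≡ -2π N_d τ` and `ΔM ≡ 2π N_p τ` (mod 2π),
iff `N_p ΔΩ + N_d ΔM ≡ 0 (mod 2π)`. -/
theorem same_relative_trajectory_prograde
    (Nd Np : ℕ) (hNd : 0 < Nd) (hNp : 0 < Np) (hcop : Nat.Coprime Nd Np) :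
    ∀ ΔΩ ΔM : ℝ,
      (∃ τ : ℝ, (∃ k : ℤ, ΔΩ - (-(2 * π * Nd * τ)) = 2 * π * k) ∧
                (∃ k : ℤ, ΔM - 2 * π * Np * τ = 2 * π * k)) ↔
      (∃ k : ℤ, Np * ΔΩ + Nd * ΔM = 2 * π * k) := by
  intro ΔΩ ΔM
  constructor
  · rintro ⟨τ, ⟨k₁, h₁⟩, ⟨k₂, h₂⟩⟩
    refine ⟨Np * k₁ + Nd * k₂, ?_⟩
    push_cast
    linear_combination (Np : ℝ) * h₁ + (Nd : ℝ) * h₂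
  · rintro ⟨k, hk⟩
    -- Bezout: Nd * A + Np * B = 1
    have hbez : (Nd : ℤ) * Int.gcdA Nd Np + (Np : ℤ) * Int.gcdB Nd Np = 1 := by
      have := Int.gcd_eq_gcd_ab (Nd : ℤ) (Np : ℤ)
      rw [Int.gcd_natCast_natCast, hcop] at this
      exact_mod_cast this.symm
    set c : ℤ := -Int.gcdA Nd Np with hc
    set d : ℤ := Int.gcdB Nd Np with hd
    have hcd : (Np : ℤ) * d - (Nd : ℤ) * c = 1 := by rw [hc, hd]; linarith [hbez]
    have hcdR : (Np : ℝ) * (d : ℝ) - (Nd : ℝ) * (c : ℝ) = 1 := by exact_mod_cast hcd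
    have hπ : (2 : ℝ) * π ≠ 0 := by positivity
    refine ⟨((c : ℝ) * ΔΩ + (d : ℝ) * ΔM) / (2 * π), ⟨d * k, ?_⟩, ⟨-(c * k), ?_⟩⟩
    · push_cast
      field_simp
      linear_combination (d : ℝ) * hk + (-ΔΩ) * hcdR
    · push_cast
      field_simp
      linear_combination (-(c : ℝ)) * hk + (-ΔM) * hcdR
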